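/- Let f : ℕ → ℕ be a function such that either f is almost constant (there exist c and N with f(x) = c for all x ≥ N) or f is almost the identity (there exists N with f(x) = x for all x ≥ N). Then for every linear order ≺ on ℕ that is isomorphic to the standard order on ℕ via an isomorphism φ, the image function f_φ := φ ∘ f ∘ φ⁻¹ is computable whenever ≺ is computable. -/

import Mathlib

/-- A function that agrees with a computable function outside a finite set is computable. -/
lemma computable_of_finite_diff (S : Finset ℕ) :
    ∀ (g F : ℕ → ℕ), Computable g → (∀ a ∉ S, F a = g a) → Computable F := by
  induction S using Finset.induction_on with
  | empty =>
    intro g F hg h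
    exact hg.of_eq fun a => (h a (Finset.notMem_empty a)).symm
  | @insert x S hx ih =>
    intro g F hg h
    have hF' : Computable (fun a => if a = x then g x else F a) := by
      apply ih g _ hg
      intro a ha
      by_cases hax : a = x
      · simp [hax]
      · simp only [if_neg hax]
        exact h a (by simp [hax, ha])
    have : Computable (fun a => bif decide (a = x) then F x else (if a = x then g x else F a)) := by
      have hc : Computable (fun a : ℕ => decide (a = x)) :=
        (Primrec.eq.comp Primrec.id (Primrec.const x)).decide.to_comp
      exact Computable.cond hc (Computable.const (F x)) hF'
    exact this.of_eq fun a => by by_cases hax : a = x <;> simp [hax]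

theorem intrinsically_computable_of_almost_trivial (f : ℕ → ℕ)
    (hf : (∃ c N, ∀ x ≥ N, f x = c) ∨ (∃ N, ∀ x ≥ N, f x = x))
    (r : ℕ → ℕ → Prop) (hlin : IsStrictTotalOrder ℕ r)
    (χ : ℕ → ℕ → Bool) (hχ : Computable fun p : ℕ × ℕ => χ p.1 p.2)
    (hχr : ∀ x y, r x y ↔ χ x y = true)
    (φ : ℕ ≃ ℕ) (hiso : ∀ x y, x < y ↔ r (φ x) (φ y)) :
    Computable fun a => φ (f (φ.symm a)) := by
  rcases hf with ⟨c, N, hc⟩ | ⟨N, hid⟩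
  · apply computable_of_finite_diff ((Finset.range N).image φ) (fun _ => φ c)
    · exact Computable.const (φ c)
    · intro a ha
      have hge : N ≤ φ.symm a := by
        by_contra hlt
        push_neg at hlt
        exact ha (Finset.mem_image.2 ⟨φ.symm a, Finset.mem_range.2 hlt, φ.apply_symm_apply a⟩)
      rw [hc _ hge]
  · apply computable_of_finite_diff ((Finset.range N).image φ) id _ Computable.id
    intro a ha
    have hge : N ≤ φ.symm a := by
      by_contra hlt
      push_neg at hlt
      exact ha (Finset.mem_image.2 ⟨φ.symm a, Finset.mem_range.2 hlt, φ.apply_symm_apply a⟩)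
    rw [hid _ hge, φ.apply_symm_apply]; rfl
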